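/- Fix n ≥ 1 and let T̃ be an invertible symmetric n × n real matrix. Let T be the (n+2) × (n+2) symmetric matrix in block form [[0, 0, 1], [0, T̃, 0], [1, 0, 0]] (blocks of sizes 1, n, 1), and let e_{n+2} ∈ ℝ^{n+2} be the last standard basis vector. Then the stabilizer { g ∈ GL(n+2, ℝ) : gᵀ T g = T and g·e_{n+2} = e_{n+2} } consists exactly of the matrices [[1, 0, 0], [d, A, 0], [−(1/2)·dᵀT̃d, −dᵀT̃A, 1]] with A ∈ O(T̃) := { A ∈ GL(n, ℝ) : AᵀT̃A = T̃ } and d ∈ ℝⁿ, and the map sending the affine orthogonal transformation x ↦ Ax + d of (ℝⁿ, T̃) to this matrix is a group isomorphism from the affine orthogonal group ℝⁿ ⋊ O(T̃) onto this stabilizer. -/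

import Mathlib

open Matrix

/-- The symmetric bilinear form `[[0,0,1],[0,T̃,0],[1,0,0]]` on `ℝ^(n+2)`
(realized as `(Fin 1 ⊕ (Fin n ⊕ Fin 1)) → ℝ`). -/
def extendedForm (n : ℕ) (Tt : Matrix (Fin n) (Fin n) ℝ) :
    Matrix (Fin 1 ⊕ (Fin n ⊕ Fin 1)) (Fin 1 ⊕ (Fin n ⊕ Fin 1)) ℝ :=
  Matrix.of fun i j =>
    match i, j with
    | Sum.inl _, Sum.inr (Sum.inr _) => 1
    | Sum.inr (Sum.inl i), Sum.inr (Sum.inl j) => Tt i j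
    | Sum.inr (Sum.inr _), Sum.inl _ => 1
    | _, _ => 0

/-- The matrix `[[1,0,0],[d,A,0],[−(1/2)dᵀT̃d, −dᵀT̃A, 1]]` associated to the affine
orthogonal transformation `x ↦ Ax + d` of `(ℝⁿ, T̃)`. -/
noncomputable def affOrthMatrix (n : ℕ) (Tt A : Matrix (Fin n) (Fin n) ℝ) (d : Fin n → ℝ) :
    Matrix (Fin 1 ⊕ (Fin n ⊕ Fin 1)) (Fin 1 ⊕ (Fin n ⊕ Fin 1)) ℝ :=
  Matrix.of fun i j =>
    match i, j with
    | Sum.inl _, Sum.inl _ => 1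
    | Sum.inl _, _ => 0
    | Sum.inr (Sum.inl i), Sum.inl _ => d i
    | Sum.inr (Sum.inl i), Sum.inr (Sum.inl j) => A i j
    | Sum.inr (Sum.inl _), Sum.inr (Sum.inr _) => 0
    | Sum.inr (Sum.inr _), Sum.inl _ => -(1 / 2 : ℝ) * (d ⬝ᵥ (Tt *ᵥ d))
    | Sum.inr (Sum.inr _), Sum.inr (Sum.inl j) => -((d ᵥ* (Tt * A)) j)
    | Sum.inr (Sum.inr _), Sum.inr (Sum.inr _) => 1

/-- The last standard basis vector of `ℝ^(n+2)`. -/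
def lastVec (n : ℕ) : (Fin 1 ⊕ (Fin n ⊕ Fin 1)) → ℝ :=
  Sum.elim (fun _ => 0) (Sum.elim (fun _ => 0) (fun _ => 1))

section aux
variable {n : ℕ} (Tt : Matrix (Fin n) (Fin n) ℝ)

lemma sandwich_apply (M : Matrix (Fin 1 ⊕ (Fin n ⊕ Fin 1)) (Fin 1 ⊕ (Fin n ⊕ Fin 1)) ℝ)
    (i j : Fin 1 ⊕ (Fin n ⊕ Fin 1)) :
    (Mᵀ * extendedForm n Tt * M) i j
      = M (Sum.inl 0) i * M (Sum.inr (Sum.inr 0)) j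
        + (∑ a : Fin n, ∑ b : Fin n,
            M (Sum.inr (Sum.inl a)) i * Tt a b * M (Sum.inr (Sum.inl b)) j)
        + M (Sum.inr (Sum.inr 0)) i * M (Sum.inl 0) j := by
  simp [Matrix.mul_apply, extendedForm, Fintype.sum_sum_type, Fin.sum_univ_one,
    Finset.sum_mul, Finset.mul_sum, Matrix.transpose_apply]
  rw [Finset.sum_comm]
  ring
end aux
section aux2
variable {n : ℕ} {Tt : Matrix (Fin n) (Fin n) ℝ}

lemma tt_symm_apply (hTsym : Ttᵀ = Tt) (a b : Fin n) : Tt a b = Tt b a := by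
  conv_lhs => rw [← hTsym]
  rfl

lemma aff_mem (hTsym : Ttᵀ = Tt) (A : Matrix (Fin n) (Fin n) ℝ) (d : Fin n → ℝ)
    (hA : Aᵀ * Tt * A = Tt) :
    (affOrthMatrix n Tt A d)ᵀ * extendedForm n Tt * affOrthMatrix n Tt A d
      = extendedForm n Tt := by
  ext i j
  rw [sandwich_apply]
  have hAe : ∀ i j, (Aᵀ * Tt * A) i j = Tt i j := fun i j => by rw [hA]
  rcases i with i | i | i <;> rcases j with j | j | j <;>
    simp only [affOrthMatrix, extendedForm, Matrix.of_apply]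
  · -- inl inl : 2γ + dᵀTtd = 0
    have : d ⬝ᵥ (Tt *ᵥ d) = ∑ a : Fin n, ∑ b : Fin n, d a * Tt a b * d b := by
      simp [dotProduct, mulVec, Finset.mul_sum, mul_assoc]
    rw [this]; ring
  · -- inl, inr inl j
    have : (d ᵥ* (Tt * A)) j = ∑ a : Fin n, ∑ b : Fin n, d a * Tt a b * A b j := by
      simp [vecMul, dotProduct, Matrix.mul_apply, Finset.mul_sum, mul_assoc]
    rw [this]; ring
  · simp
  · -- inr inl i, inl : AᵀTtd − dTtA = 0 (uses symmetry)
    have h1 : (d ᵥ* (Tt * A)) i = ∑ a : Fin n, ∑ b : Fin n, d a * Tt a b * A b i := by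
      simp [vecMul, dotProduct, Matrix.mul_apply, Finset.mul_sum, mul_assoc]
    have h2 : ∑ a : Fin n, ∑ b : Fin n, A a i * Tt a b * d b
        = ∑ a : Fin n, ∑ b : Fin n, d a * Tt a b * A b i := by
      rw [Finset.sum_comm]
      refine Finset.sum_congr rfl fun a _ => Finset.sum_congr rfl fun b _ => ?_
      rw [tt_symm_apply hTsym b a]; ring
    rw [h1, h2]; ring
  · -- middle block : AᵀTtA = Tt
    have := hAe i j
    simp only [Matrix.mul_apply, Matrix.transpose_apply, Finset.sum_mul] at this
    rw [← this]
    rw [Finset.sum_comm]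
    simp [Finset.sum_mul]
  · simp
  · simp
  · simp
  · simp

lemma aff_fix (A : Matrix (Fin n) (Fin n) ℝ) (d : Fin n → ℝ) :
    affOrthMatrix n Tt A d *ᵥ lastVec n = lastVec n := by
  ext i
  rcases i with i | i | i <;>
    simp [affOrthMatrix, lastVec, mulVec, dotProduct, Fintype.sum_sum_type]

end aux2
section aux3
variable {n : ℕ} {Tt : Matrix (Fin n) (Fin n) ℝ}

lemma key1 (hTsym : Ttᵀ = Tt) {A₂ : Matrix (Fin n) (Fin n) ℝ} (h2 : A₂ᵀ * Tt * A₂ = Tt)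
    (d₁ d₂ : Fin n → ℝ) :
    (A₂ *ᵥ d₁ + d₂) ⬝ᵥ (Tt *ᵥ (A₂ *ᵥ d₁ + d₂))
      = d₁ ⬝ᵥ (Tt *ᵥ d₁) + 2 * ((d₂ ᵥ* (Tt * A₂)) ⬝ᵥ d₁) + d₂ ⬝ᵥ (Tt *ᵥ d₂) := by
  have e1 : (A₂ *ᵥ d₁) ⬝ᵥ (Tt *ᵥ (A₂ *ᵥ d₁)) = d₁ ⬝ᵥ (Tt *ᵥ d₁) := by
    rw [Matrix.mulVec_mulVec, ← Matrix.vecMul_transpose, Matrix.dotProduct_mulVec,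
      Matrix.vecMul_vecMul, ← Matrix.mul_assoc, h2, ← Matrix.dotProduct_mulVec]
  have e2 : (A₂ *ᵥ d₁) ⬝ᵥ (Tt *ᵥ d₂) = (d₂ ᵥ* (Tt * A₂)) ⬝ᵥ d₁ := by
    rw [Matrix.dotProduct_mulVec, ← Matrix.vecMul_transpose, Matrix.vecMul_vecMul]
    have h : A₂ᵀ * Tt = (Tt * A₂)ᵀ := by rw [Matrix.transpose_mul, hTsym]
    rw [h, Matrix.vecMul_transpose, dotProduct_comm, Matrix.dotProduct_mulVec]
  have e3 : d₂ ⬝ᵥ (Tt *ᵥ (A₂ *ᵥ d₁)) = (d₂ ᵥ* (Tt * A₂)) ⬝ᵥ d₁ := by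
    rw [Matrix.mulVec_mulVec, Matrix.dotProduct_mulVec]
  rw [Matrix.mulVec_add, dotProduct_add, add_dotProduct, add_dotProduct,
    e1, e2, e3]
  ring

lemma key2 (hTsym : Ttᵀ = Tt) {A₁ A₂ : Matrix (Fin n) (Fin n) ℝ} (h2 : A₂ᵀ * Tt * A₂ = Tt)
    (d₁ d₂ : Fin n → ℝ) :
    (A₂ *ᵥ d₁ + d₂) ᵥ* (Tt * (A₂ * A₁))
      = d₁ ᵥ* (Tt * A₁) + (d₂ ᵥ* (Tt * A₂)) ᵥ* A₁ := by
  rw [Matrix.add_vecMul, ← Matrix.vecMul_transpose, Matrix.vecMul_vecMul, Matrix.vecMul_vecMul,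
    ← Matrix.mul_assoc, ← Matrix.mul_assoc, h2, Matrix.mul_assoc]

lemma aff_comp (hTsym : Ttᵀ = Tt) (A₁ A₂ : Matrix (Fin n) (Fin n) ℝ) (d₁ d₂ : Fin n → ℝ)
    (h2 : A₂ᵀ * Tt * A₂ = Tt) :
    affOrthMatrix n Tt A₂ d₂ * affOrthMatrix n Tt A₁ d₁ =
      affOrthMatrix n Tt (A₂ * A₁) (A₂ *ᵥ d₁ + d₂) := by
  ext i j
  have hm : ∀ (M N : Matrix (Fin 1 ⊕ (Fin n ⊕ Fin 1)) (Fin 1 ⊕ (Fin n ⊕ Fin 1)) ℝ)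
      (i j : Fin 1 ⊕ (Fin n ⊕ Fin 1)),
      (M * N) i j = M i (Sum.inl 0) * N (Sum.inl 0) j
        + (∑ k : Fin n, M i (Sum.inr (Sum.inl k)) * N (Sum.inr (Sum.inl k)) j)
        + M i (Sum.inr (Sum.inr 0)) * N (Sum.inr (Sum.inr 0)) j := by
    intro M N i j
    simp [Matrix.mul_apply, Fintype.sum_sum_type, Fin.sum_univ_one]
    ring
  rw [hm]
  rcases i with i | i | i <;> rcases j with j | j | j <;>
    simp only [affOrthMatrix, Matrix.of_apply]
  · simp
  · simp
  · simp
  · -- (A₂d₁+d₂) i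
    simp only [mulVec, dotProduct, Pi.add_apply, mul_one, mul_zero, zero_mul, add_zero, zero_add]
    ring
  · simp [Matrix.mul_apply]
  · simp
  · -- scalar: γ entries
    rw [key1 hTsym h2 d₁ d₂]
    simp only [dotProduct, neg_mul, mul_one, mul_zero, one_mul, zero_mul, add_zero, zero_add]
    rw [Finset.sum_neg_distrib]
    ring
  · -- row : −dᵀTtA entries
    rw [key2 hTsym h2 d₁ d₂]
    simp only [Pi.add_apply, vecMul, dotProduct, neg_mul, one_mul, mul_zero, mul_one, zero_mul,
      add_zero, zero_add]
    rw [Finset.sum_neg_distrib]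
    ring
  · simp
end aux3
section aux4
variable {n : ℕ} {Tt : Matrix (Fin n) (Fin n) ℝ}

lemma stab_structure (hTsym : Ttᵀ = Tt) (hTinv : IsUnit Tt)
    (M : Matrix (Fin 1 ⊕ (Fin n ⊕ Fin 1)) (Fin 1 ⊕ (Fin n ⊕ Fin 1)) ℝ)
    (H : Mᵀ * extendedForm n Tt * M = extendedForm n Tt)
    (He : M *ᵥ lastVec n = lastVec n) :
    ∃ (A : Matrix (Fin n) (Fin n) ℝ) (d : Fin n → ℝ),
      IsUnit A ∧ Aᵀ * Tt * A = Tt ∧ M = affOrthMatrix n Tt A d := by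
  set E : Matrix (Fin n) (Fin n) ℝ :=
    Matrix.of fun i j => M (Sum.inr (Sum.inl i)) (Sum.inr (Sum.inl j)) with hEdef
  set d : Fin n → ℝ := fun i => M (Sum.inr (Sum.inl i)) (Sum.inl 0) with hddef
  -- last column facts
  have Hcol : ∀ i, M i (Sum.inr (Sum.inr 0)) = lastVec n i := by
    intro i
    have := congrFun He i
    simpa [mulVec, dotProduct, lastVec, Fintype.sum_sum_type, Fin.sum_univ_one] using this
  have hc : M (Sum.inl 0) (Sum.inr (Sum.inr 0)) = 0 := Hcol (Sum.inl 0)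
  have hf : ∀ i, M (Sum.inr (Sum.inl i)) (Sum.inr (Sum.inr 0)) = 0 :=
    fun i => Hcol (Sum.inr (Sum.inl i))
  have hk : M (Sum.inr (Sum.inr 0)) (Sum.inr (Sum.inr 0)) = 1 := Hcol (Sum.inr (Sum.inr 0))
  have Hij : ∀ i j, M (Sum.inl 0) i * M (Sum.inr (Sum.inr 0)) j
        + (∑ a : Fin n, ∑ b : Fin n,
            M (Sum.inr (Sum.inl a)) i * Tt a b * M (Sum.inr (Sum.inl b)) j)
        + M (Sum.inr (Sum.inr 0)) i * M (Sum.inl 0) j = extendedForm n Tt i j := by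
    intro i j; rw [← sandwich_apply, H]
  have ha : M (Sum.inl 0) (Sum.inl 0) = 1 := by
    have := Hij (Sum.inl 0) (Sum.inr (Sum.inr 0))
    simpa [extendedForm, hc, hk, hf] using this
  have hb : ∀ j, M (Sum.inl 0) (Sum.inr (Sum.inl j)) = 0 := by
    intro j
    have := Hij (Sum.inr (Sum.inl j)) (Sum.inr (Sum.inr 0))
    simpa [extendedForm, hc, hk, hf] using this
  have hE' : Eᵀ * Tt * E = Tt := by
    ext i j
    have h1 := Hij (Sum.inr (Sum.inl i)) (Sum.inr (Sum.inl j))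
    simp only [hb, zero_mul, mul_zero, add_zero, zero_add, extendedForm, Matrix.of_apply] at h1
    simp only [Matrix.mul_apply, Matrix.transpose_apply, Finset.sum_mul, hEdef, Matrix.of_apply]
    rw [Finset.sum_comm]
    exact h1
  have hEunit : IsUnit E := by
    have hdet : E.det * Tt.det * E.det = Tt.det := by
      have := congrArg Matrix.det hE'
      simpa [Matrix.det_mul, Matrix.det_transpose] using this
    have hTd : Tt.det ≠ 0 := by
      have := (Matrix.isUnit_iff_isUnit_det Tt).mp hTinv
      exact IsUnit.ne_zero this
    have hEd : E.det ≠ 0 := by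
      intro h0
      apply hTd
      rw [← hdet, h0]
      ring
    exact (Matrix.isUnit_iff_isUnit_det E).mpr (isUnit_iff_ne_zero.mpr hEd)
  refine ⟨E, d, hEunit, hE', ?_⟩
  -- row facts
  have hh : ∀ j, M (Sum.inr (Sum.inr 0)) (Sum.inr (Sum.inl j)) = -((d ᵥ* (Tt * E)) j) := by
    intro j
    have h1 := Hij (Sum.inl 0) (Sum.inr (Sum.inl j))
    simp only [ha, hb, one_mul, mul_zero, add_zero, extendedForm, Matrix.of_apply] at h1
    have h2 : (d ᵥ* (Tt * E)) j
        = ∑ a : Fin n, ∑ b : Fin n,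
            M (Sum.inr (Sum.inl a)) (Sum.inl 0) * Tt a b * M (Sum.inr (Sum.inl b)) (Sum.inr (Sum.inl j)) := by
      simp [vecMul, dotProduct, Matrix.mul_apply, hEdef, hddef, Finset.mul_sum, mul_assoc]
    rw [h2]
    linarith [h1]
  have hγ : M (Sum.inr (Sum.inr 0)) (Sum.inl 0) = -(1 / 2 : ℝ) * (d ⬝ᵥ (Tt *ᵥ d)) := by
    have h1 := Hij (Sum.inl 0) (Sum.inl 0)
    simp only [ha, one_mul, mul_one, extendedForm, Matrix.of_apply] at h1
    have h2 : d ⬝ᵥ (Tt *ᵥ d)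
        = ∑ a : Fin n, ∑ b : Fin n,
            M (Sum.inr (Sum.inl a)) (Sum.inl 0) * Tt a b * M (Sum.inr (Sum.inl b)) (Sum.inl 0) := by
      simp [dotProduct, mulVec, hddef, Finset.mul_sum, mul_assoc]
    rw [h2]
    linarith [h1]
  ext i j
  rcases i with i | i | i <;> rcases j with j | j | j <;>
      [skip; skip; skip; skip; skip; skip; skip; skip; skip] <;>
      (try rw [Fin.fin_one_eq_zero i]) <;> (try rw [Fin.fin_one_eq_zero j]) <;>
      simp only [affOrthMatrix, Matrix.of_apply]
  · exact ha
  · exact hb j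
  · exact hc
  · rfl
  · rfl
  · exact hf i
  · exact hγ
  · exact hh j
  · exact hk
end aux4


/-- the stabilizer of the last standard basis vector in the orthogonal
group of the form `T = [[0,0,1],[0,T̃,0],[1,0,0]]` consists exactly of the matrices
`[[1,0,0],[d,A,0],[−(1/2)dᵀT̃d, −dᵀT̃A, 1]]` with `A ∈ O(T̃)` and `d ∈ ℝⁿ`, and the map
sending the affine orthogonal transformation `x ↦ Ax + d` to this matrix is a group
isomorphism from the affine orthogonal group `ℝⁿ ⋊ O(T̃)` onto this stabilizer. -/
theorem affine_orthogonal_group_as_stabilizer (n : ℕ) (hn : 1 ≤ n)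
    (Tt : Matrix (Fin n) (Fin n) ℝ) (hTsym : Ttᵀ = Tt) (hTinv : IsUnit Tt) :
    (∀ g : GL (Fin 1 ⊕ (Fin n ⊕ Fin 1)) ℝ,
      ((g : Matrix _ _ ℝ)ᵀ * extendedForm n Tt * (g : Matrix _ _ ℝ) = extendedForm n Tt ∧
          (g : Matrix _ _ ℝ) *ᵥ lastVec n = lastVec n) ↔
        ∃ (A : Matrix (Fin n) (Fin n) ℝ) (d : Fin n → ℝ),
          IsUnit A ∧ Aᵀ * Tt * A = Tt ∧
          (g : Matrix _ _ ℝ) = affOrthMatrix n Tt A d) ∧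
    (∀ (A₁ A₂ : Matrix (Fin n) (Fin n) ℝ) (d₁ d₂ : Fin n → ℝ),
      IsUnit A₁ → A₁ᵀ * Tt * A₁ = Tt → IsUnit A₂ → A₂ᵀ * Tt * A₂ = Tt →
      affOrthMatrix n Tt A₂ d₂ * affOrthMatrix n Tt A₁ d₁ =
        affOrthMatrix n Tt (A₂ * A₁) (A₂ *ᵥ d₁ + d₂)) ∧
    (∀ (A A' : Matrix (Fin n) (Fin n) ℝ) (d d' : Fin n → ℝ),
      affOrthMatrix n Tt A d = affOrthMatrix n Tt A' d' → A = A' ∧ d = d') := by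
  refine ⟨?_, ?_, ?_⟩
  · intro g
    constructor
    · rintro ⟨H, He⟩
      exact stab_structure hTsym hTinv _ H He
    · rintro ⟨A, dd, hAu, hA, hg⟩
      rw [hg]
      exact ⟨aff_mem hTsym A dd hA, aff_fix A dd⟩
  · intro A₁ A₂ d₁ d₂ _ _ _ h2
    exact aff_comp hTsym A₁ A₂ d₁ d₂ h2
  · intro A A' d d' h
    constructor
    · ext i j
      have := congrFun (congrFun h (Sum.inr (Sum.inl i))) (Sum.inr (Sum.inl j))
      simpa [affOrthMatrix] using this
    · funext i
      have := congrFun (congrFun h (Sum.inr (Sum.inl i))) (Sum.inl 0)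
      simpa [affOrthMatrix] using this
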